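/- Let M be a 3-connected matroid and let F be a fan of M of length |F| ≥ 3 with fan ordering (e_1, …, e_{|F|}), such that |E(M)| ≥ |F| + 2. If {e_1, e_2, e_3} is a triangle, then r(F) = ⌊|F|/2⌋ + 1 and r*(F) = ⌈|F|/2⌉ + 1; if {e_1, e_2, e_3} is a triad, then r(F) = ⌈|F|/2⌉ + 1 and r*(F) = ⌊|F|/2⌋ + 1. In both cases λ(F) = 2. -/

import Mathlib

open Matroid Set

namespace DetPairs

variable {α : Type*}

/-- The rank of a set in a matroid: the maximum size of an independent subset
(as an integer, for convenient arithmetic). -/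
noncomputable def r (M : Matroid α) (X : Set α) : ℤ :=
  ((sSup (Set.ncard '' {I | M.Indep I ∧ I ⊆ X}) : ℕ) : ℤ)

/-- The connectivity function `λ_M(X) = r(X) + r(E − X) − r(M)`. -/
noncomputable def lam (M : Matroid α) (X : Set α) : ℤ :=
  r M X + r M (M.E \ X) - r M M.E

/-- Local connectivity `⊓(X,Y) = r(X) + r(Y) − r(X ∪ Y)`. -/
noncomputable def localConn (M : Matroid α) (X Y : Set α) : ℤ :=
  r M X + r M Y - r M (X ∪ Y)

/-- A circuit: a minimal dependent set. -/
def Circuit (M : Matroid α) (C : Set α) : Prop :=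
  C ⊆ M.E ∧ ¬ M.Indep C ∧ ∀ D, D ⊂ C → M.Indep D

/-- A cocircuit: a circuit of the dual. -/
def Cocircuit (M : Matroid α) (C : Set α) : Prop := Circuit M✶ C

/-- A triangle: a 3-element circuit. -/
def Triangle (M : Matroid α) (T : Set α) : Prop := Circuit M T ∧ T.ncard = 3

/-- A triad: a 3-element cocircuit. -/
def Triad (M : Matroid α) (T : Set α) : Prop := Cocircuit M T ∧ T.ncard = 3

/-- A quad: a 4-element set that is both a circuit and a cocircuit. -/
def Quad (M : Matroid α) (Q : Set α) : Prop :=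
  Circuit M Q ∧ Cocircuit M Q ∧ Q.ncard = 4

/-- Deletion of a set of elements. -/
def Del (M : Matroid α) (D : Set α) : Matroid α := M ↾ (M.E \ D)

/-- Contraction of a set of elements. -/
def Con (M : Matroid α) (C : Set α) : Matroid α := (M✶ ↾ (M.E \ C))✶

/-- `M` is 3-connected: it has no `k`-separation for `k = 1, 2`, where a
`k`-separation is a set `X` with `λ(X) = k − 1`, `|X| ≥ k` and `|E − X| ≥ k`. -/
def ThreeConnected (M : Matroid α) : Prop :=
  ∀ k : ℕ, 0 < k → k < 3 → ∀ X ⊆ M.E,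
    ¬ (lam M X = (k : ℤ) - 1 ∧ (k : ℤ) ≤ X.ncard ∧ (k : ℤ) ≤ (M.E \ X).ncard)

/-- A detachable pair: distinct elements `e, f` such that `M \ e \ f` or
`M / e / f` is 3-connected. -/
def DetachablePair (M : Matroid α) (e f : α) : Prop :=
  e ≠ f ∧ e ∈ M.E ∧ f ∈ M.E ∧
    (ThreeConnected (Del M {e, f}) ∨ ThreeConnected (Con M {e, f}))

/-- The triple of elements with indices `i, i+1, i+2` in an ordering. -/
def tri (e : ℕ → α) (i : ℕ) : Set α := {e i, e (i + 1), e (i + 2)}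

/-- `(e 0, …, e (n-1))` is a fan ordering of length `n ≥ 3` in `M`:
consecutive triples alternate between triangles and triads. -/
def FanOrd (M : Matroid α) (n : ℕ) (e : ℕ → α) : Prop :=
  3 ≤ n ∧ Set.InjOn e (Set.Iio n) ∧ (∀ i < n, e i ∈ M.E) ∧
    (Triangle M (tri e 0) ∨ Triad M (tri e 0)) ∧
    ∀ i, i + 3 < n →
      (Triangle M (tri e i) → Triad M (tri e (i + 1))) ∧
      (Triad M (tri e i) → Triangle M (tri e (i + 1)))

/-- A fan (as a set): either a 2-element subset of the ground set, or the
underlying set of a fan ordering of length at least 3. -/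
def IsFan (M : Matroid α) (F : Set α) : Prop :=
  (F ⊆ M.E ∧ F.ncard = 2) ∨ ∃ n e, FanOrd M n e ∧ F = e '' Set.Iio n

/-- A maximal fan: a fan contained in no strictly larger fan. -/
def MaximalFan (M : Matroid α) (F : Set α) : Prop :=
  IsFan M F ∧ ∀ F', IsFan M F' → F ⊆ F' → F' = F

/-- `M` is a wheel or a whirl: its ground set has a cyclic ordering of even size
`2n` in which consecutive triples alternate between triangles and triads. -/
def IsWheelOrWhirl (M : Matroid α) : Prop :=
  ∃ (n : ℕ) (e : ℕ → α), 2 ≤ n ∧ Set.InjOn e (Set.Iio (2 * n)) ∧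
    M.E = e '' Set.Iio (2 * n) ∧
    ∀ i < 2 * n,
      (i % 2 = 0 → Triangle M {e i, e ((i + 1) % (2 * n)), e ((i + 2) % (2 * n))}) ∧
      (i % 2 = 1 → Triad M {e i, e ((i + 1) % (2 * n)), e ((i + 2) % (2 * n))})

/-- An `M(K₄)`-separator: a 6-element set `{a,b,c,x,y,z}` where `{x,y,z}` is a
triad and `{a,b,c}`, `{a,x,y}`, `{b,x,z}`, `{c,y,z}` are triangles. -/
def MK4Sep (M : Matroid α) (S : Set α) : Prop :=
  ∃ a b c x y z : α, S = {a, b, c, x, y, z} ∧ S.ncard = 6 ∧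
    Triad M {x, y, z} ∧ Triangle M {a, b, c} ∧ Triangle M {a, x, y} ∧
    Triangle M {b, x, z} ∧ Triangle M {c, y, z}

/-- A vertical 3-separation `(X, {e}, Y)` of `M`. -/
def VertThreeSep (M : Matroid α) (X : Set α) (e : α) (Y : Set α) : Prop :=
  X ∪ {e} ∪ Y = M.E ∧ Disjoint X Y ∧ e ∉ X ∧ e ∉ Y ∧
    lam M X = 2 ∧ lam M Y = 2 ∧ e ∈ M.closure X ∧ e ∈ M.closure Y ∧
    3 ≤ r M X ∧ 3 ≤ r M Y

/-- `N` is a simplification of `M`: a restriction of `M` to a set of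
representatives, one from each parallel class of nonloops. -/
def SimplificationOf (M N : Matroid α) : Prop :=
  ∃ X : Set α, (∀ x ∈ X, x ∈ M.E ∧ x ∉ M.closure ∅) ∧ N = M ↾ X ∧
    ∀ y ∈ M.E, y ∉ M.closure ∅ →
      ∃! x, x ∈ X ∧ M.closure {y} = M.closure {x}


section Aux

variable {M : Matroid α} {X Y I J S B : Set α} {n : ℕ} {e : ℕ → α}

lemma rset_nonempty (M : Matroid α) (X : Set α) :
    (Set.ncard '' {I | M.Indep I ∧ I ⊆ X}).Nonempty :=
  ⟨0, ⟨∅, ⟨M.empty_indep, empty_subset X⟩, ncard_empty α⟩⟩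

lemma rset_bdd (M : Matroid α) [M.Finite] (X : Set α) :
    BddAbove (Set.ncard '' {I | M.Indep I ∧ I ⊆ X}) := by
  refine ⟨M.E.ncard, ?_⟩
  rintro _ ⟨I, ⟨hI, _⟩, rfl⟩
  exact ncard_le_ncard hI.subset_ground M.ground_finite

lemma indep_ncard_le_basis' [M.Finite] (hI : M.IsBasis' I X) (hJ : M.Indep J) (hJX : J ⊆ X) :
    J.ncard ≤ I.ncard := by
  obtain ⟨J', hJ', hJJ'⟩ := hJ.subset_isBasis'_of_subset hJX
  have h1 : J'.encard = I.encard := hJ'.encard_eq_encard hI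
  have hJ'fin : J'.Finite := M.ground_finite.subset hJ'.indep.subset_ground
  calc J.ncard ≤ J'.ncard := ncard_le_ncard hJJ' hJ'fin
    _ = I.ncard := by rw [ncard_def, h1, ← ncard_def]

lemma r_eq_of [M.Finite] (hS : M.Indep S) (hSX : S ⊆ X)
    (hmax : ∀ J, M.Indep J → J ⊆ X → J.ncard ≤ S.ncard) : r M X = S.ncard := by
  have h : sSup (Set.ncard '' {I | M.Indep I ∧ I ⊆ X}) = S.ncard := by
    apply le_antisymm
    · refine csSup_le (rset_nonempty M X) ?_
      rintro _ ⟨J, ⟨hJ, hJX⟩, rfl⟩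
      exact hmax J hJ hJX
    · exact le_csSup (rset_bdd M X) ⟨S, ⟨hS, hSX⟩, rfl⟩
  rw [r, h]

lemma r_basis' [M.Finite] (hI : M.IsBasis' I X) : r M X = I.ncard :=
  r_eq_of hI.indep hI.subset fun J hJ hJX => indep_ncard_le_basis' hI hJ hJX

lemma indep_le_r [M.Finite] (hI : M.Indep I) (hIX : I ⊆ X) : (I.ncard : ℤ) ≤ r M X := by
  obtain ⟨J, hJ⟩ := M.exists_isBasis' X
  rw [r_basis' hJ]
  exact_mod_cast indep_ncard_le_basis' hJ hI hIX

lemma r_le_ncard (hX : X.Finite) : r M X ≤ X.ncard := by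
  refine Int.ofNat_le.mpr (csSup_le (rset_nonempty M X) ?_)
  rintro _ ⟨J, ⟨_, hJX⟩, rfl⟩
  exact ncard_le_ncard hJX hX

lemma r_mono [M.Finite] (h : X ⊆ Y) : r M X ≤ r M Y := by
  refine Int.ofNat_le.mpr (csSup_le_csSup (rset_bdd M Y) (rset_nonempty M X) ?_)
  rintro _ ⟨J, ⟨hJ, hJX⟩, rfl⟩
  exact ⟨J, ⟨hJ, hJX.trans h⟩, rfl⟩

lemma r_closure (M : Matroid α) [M.Finite] (X : Set α) : r M (M.closure X) = r M X := by
  obtain ⟨I, hI⟩ := M.exists_isBasis' X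
  rw [r_basis' hI, r_basis' hI.isBasis_closure_right.isBasis']

lemma r_le_of_subset_closure [M.Finite] {G : Set α} (h : X ⊆ M.closure G) :
    r M X ≤ r M G := (r_mono h).trans_eq (r_closure M G)

lemma r_union_le (M : Matroid α) [M.Finite] (X Y : Set α) :
    r M (X ∪ Y) ≤ r M X + r M Y := by
  obtain ⟨J, hJ⟩ := M.exists_isBasis' (X ∪ Y)
  rw [r_basis' hJ]
  have hJfin : J.Finite := M.ground_finite.subset hJ.indep.subset_ground
  have h1 : (J.ncard : ℤ) ≤ (J ∩ X).ncard + (J \ X).ncard := by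
    have := ncard_inter_add_ncard_diff_eq_ncard J X hJfin
    omega
  have h2 : ((J ∩ X).ncard : ℤ) ≤ r M X := indep_le_r (hJ.indep.inter_right X) inter_subset_right
  have h3 : ((J \ X).ncard : ℤ) ≤ r M Y := by
    refine indep_le_r (hJ.indep.subset diff_subset) ?_
    intro x hx
    rcases hJ.subset hx.1 with h | h
    · exact absurd h hx.2
    · exact h
  linarith

lemma r_ground_base [M.Finite] (hB : M.IsBase B) : r M M.E = B.ncard :=
  r_basis' hB.isBasis_ground.isBasis'

lemma r_dual_eq [M.Finite] (hX : X ⊆ M.E) :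
    r M✶ X = X.ncard + r M (M.E \ X) - r M M.E := by
  obtain ⟨I, hI⟩ := M.exists_isBasis' (M.E \ X)
  obtain ⟨B, hB, hIB⟩ := hI.indep.exists_isBase_superset
  have hE : M.E.Finite := M.ground_finite
  have hXfin : X.Finite := hE.subset hX
  have hBfin : B.Finite := hE.subset hB.subset_ground
  have hBI : I = B ∩ (M.E \ X) :=
    hI.eq_of_subset_indep (hB.indep.inter_right _) (subset_inter hIB hI.subset)
      inter_subset_right
  have hBX : B \ X = B ∩ (M.E \ X) := by
    ext a
    simp only [mem_diff, mem_inter_iff]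
    exact ⟨fun ⟨h1, h2⟩ => ⟨h1, hB.subset_ground h1, h2⟩, fun ⟨h1, _, h3⟩ => ⟨h1, h3⟩⟩
  have hco : M✶.Indep (X \ B) := by
    rw [dual_indep_iff_exists (diff_subset.trans hX)]
    exact ⟨B, hB, disjoint_sdiff_left⟩
  have hmax : ∀ J, M✶.Indep J → J ⊆ X → J.ncard ≤ (X \ B).ncard := by
    intro J hJ hJX
    obtain ⟨hJE, B₂, hB₂, hdisj⟩ := (dual_indep_iff_exists').mp hJ
    have hB₂fin : B₂.Finite := hE.subset hB₂.subset_ground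
    have hB₂X : B₂ \ X = B₂ ∩ (M.E \ X) := by
      ext a
      simp only [mem_diff, mem_inter_iff]
      exact ⟨fun ⟨h1, h2⟩ => ⟨h1, hB₂.subset_ground h1, h2⟩, fun ⟨h1, _, h3⟩ => ⟨h1, h3⟩⟩
    have e1 : (B₂ ∩ X).ncard + (B₂ \ X).ncard = B₂.ncard :=
      ncard_inter_add_ncard_diff_eq_ncard B₂ X hB₂fin
    have e3 : (B₂ \ X).ncard ≤ (B \ X).ncard := by
      rw [hB₂X, hBX]
      have := indep_ncard_le_basis' hI (hB₂.indep.inter_right (M.E \ X)) inter_subset_right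
      rwa [hBI] at this
    have e4 : B₂.ncard = B.ncard := hB₂.ncard_eq_ncard_of_isBase hB
    have e5 : (B ∩ X).ncard + (B \ X).ncard = B.ncard :=
      ncard_inter_add_ncard_diff_eq_ncard B X hBfin
    have e6 : (X ∩ B₂).ncard + (X \ B₂).ncard = X.ncard :=
      ncard_inter_add_ncard_diff_eq_ncard X B₂ hXfin
    have e7 : (X ∩ B).ncard + (X \ B).ncard = X.ncard :=
      ncard_inter_add_ncard_diff_eq_ncard X B hXfin
    have e8 : J ⊆ X \ B₂ := fun x hx => ⟨hJX hx, fun hxB => hdisj.ne_of_mem hx hxB rfl⟩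
    have e9 : J.ncard ≤ (X \ B₂).ncard := ncard_le_ncard e8 (hXfin.diff (t := B₂))
    have e10 : (X ∩ B₂).ncard = (B₂ ∩ X).ncard := by rw [inter_comm]
    have e11 : (X ∩ B).ncard = (B ∩ X).ncard := by rw [inter_comm]
    omega
  have hr : r M✶ X = (X \ B).ncard := r_eq_of hco diff_subset hmax
  have hr2 : r M (M.E \ X) = (I.ncard : ℤ) := r_basis' hI
  have hr3 : r M M.E = (B.ncard : ℤ) := r_ground_base hB
  have e5 : (B ∩ X).ncard + (B \ X).ncard = B.ncard :=
    ncard_inter_add_ncard_diff_eq_ncard B X hBfin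
  have e7 : (X ∩ B).ncard + (X \ B).ncard = X.ncard :=
    ncard_inter_add_ncard_diff_eq_ncard X B hXfin
  have e11 : (X ∩ B).ncard = (B ∩ X).ncard := by rw [inter_comm]
  have e12 : I.ncard = (B \ X).ncard := by rw [hBI, hBX]
  rw [hr, hr2, hr3]
  omega

lemma r_empty (M : Matroid α) [M.Finite] : r M ∅ = 0 := by
  have := r_eq_of (M := M) M.empty_indep (subset_refl ∅)
    (fun J _ hJ => by simp [subset_empty_iff.mp hJ])
  simpa using this

lemma lam_dual [M.Finite] (hX : X ⊆ M.E) : lam M✶ X = lam M X := by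
  have hE : M.E.Finite := M.ground_finite
  have h1 : r M✶ X = X.ncard + r M (M.E \ X) - r M M.E := r_dual_eq hX
  have h2 : r M✶ (M.E \ X) = (M.E \ X).ncard + r M (M.E \ (M.E \ X)) - r M M.E :=
    r_dual_eq diff_subset
  have h3 : r M✶ M.E = M.E.ncard + r M (M.E \ M.E) - r M M.E := r_dual_eq (subset_refl _)
  have h4 : M.E \ (M.E \ X) = X := diff_diff_cancel_left hX
  have h5 : M.E \ M.E = (∅ : Set α) := diff_self
  have h6 : (M.E \ X).ncard + X.ncard = M.E.ncard :=
    ncard_diff_add_ncard_of_subset hX hE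
  rw [lam, lam, dual_ground, h1, h2, h3, h4, h5, r_empty]
  omega

lemma lam_nonneg [M.Finite] (hX : X ⊆ M.E) : 0 ≤ lam M X := by
  have h1 : r M M.E ≤ r M X + r M (M.E \ X) := by
    have := r_union_le M X (M.E \ X)
    rwa [union_diff_cancel hX] at this
  rw [lam]; omega

lemma threeConnected_dual [M.Finite] (hM : ThreeConnected M) : ThreeConnected M✶ := by
  intro k hk hk3 X hX
  rw [lam_dual (M := M) hX]
  exact hM k hk hk3 X hX

lemma lam_ge_two [M.Finite] (hM : ThreeConnected M) (hX : X ⊆ M.E)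
    (h1 : 2 ≤ X.ncard) (h2 : 2 ≤ (M.E \ X).ncard) : 2 ≤ lam M X := by
  have h0 : 0 ≤ lam M X := lam_nonneg hX
  have hxz : (2 : ℤ) ≤ (X.ncard : ℤ) := by exact_mod_cast h1
  have hyz : (2 : ℤ) ≤ ((M.E \ X).ncard : ℤ) := by exact_mod_cast h2
  by_contra hlt
  push_neg at hlt
  have hc1 := hM 1 (by norm_num) (by norm_num) X hX
  have hc2 := hM 2 (by norm_num) (by norm_num) X hX
  rcases (by omega : lam M X = 0 ∨ lam M X = 1) with h | h
  · exact hc1 ⟨by rw [h]; norm_num, by push_cast; omega, by push_cast; omega⟩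
  · exact hc2 ⟨by rw [h]; norm_num, by push_cast; omega, by push_cast; omega⟩

lemma triangle_closure {a b c : α} (hT : Triangle M {a, b, c})
    (hac : a ≠ c) (hbc : b ≠ c) : c ∈ M.closure {a, b} := by
  obtain ⟨⟨hTE, hdep, hmin⟩, -⟩ := hT
  have hsub : ({a, b} : Set α) ⊆ {a, b, c} := by
    intro x hx
    rcases hx with h | h
    · simp [h]
    · simp only [mem_singleton_iff] at h; simp [h]
  have hss : ({a, b} : Set α) ⊂ {a, b, c} := by
    refine hsub.ssubset_of_ne (fun he => ?_)
    have : c ∈ ({a, b} : Set α) := he ▸ (by simp : c ∈ ({a, b, c} : Set α))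
    rcases this with h | h
    · exact hac h.symm
    · exact hbc h.symm
  have hI : M.Indep {a, b} := hmin _ hss
  have hins : insert c ({a, b} : Set α) = {a, b, c} := by
    ext x; simp only [mem_insert_iff, mem_singleton_iff]; tauto
  rw [hI.mem_closure_iff]
  left
  rw [dep_iff, hins]
  exact ⟨hdep, hTE⟩

lemma chain (hord : FanOrd M n e) (h0 : Triangle M (tri e 0)) :
    ∀ i, i + 2 < n → (i % 2 = 0 → Triangle M (tri e i)) ∧ (i % 2 = 1 → Triad M (tri e i)) := by
  intro i
  induction i with
  | zero => exact fun _ => ⟨fun _ => h0, by omega⟩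
  | succ i ih =>
    intro hi
    have ih' := ih (by omega)
    have halt := hord.2.2.2.2 i (by omega)
    exact ⟨fun hp => halt.2 (ih'.2 (by omega)), fun hp => halt.1 (ih'.1 (by omega))⟩

lemma count0 (hn : 2 ≤ n) :
    ((Finset.range n).filter (fun j => j < 2 ∨ j % 2 ≠ 0)).card = n / 2 + 1 := by
  induction n, hn using Nat.le_induction with
  | base => rfl
  | succ n hn ih =>
    rw [Finset.range_add_one, Finset.filter_insert]
    split_ifs with h
    · rw [Finset.card_insert_of_notMem (by simp)]
      omega
    · omega

lemma count1 (hn : 2 ≤ n) :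
    ((Finset.range n).filter (fun j => j < 2 ∨ j % 2 ≠ 1)).card = (n + 1) / 2 + 1 := by
  induction n, hn using Nat.le_induction with
  | base => rfl
  | succ n hn ih =>
    rw [Finset.range_add_one, Finset.filter_insert]
    split_ifs with h
    · rw [Finset.card_insert_of_notMem (by simp)]
      omega
    · omega

lemma r_fan_le {p : ℕ} [M.Finite] (hinj : Set.InjOn e (Set.Iio n))
    (hmem : ∀ i < n, e i ∈ M.E)
    (hcl : ∀ j, j < n → 2 ≤ j → j % 2 = p → e j ∈ M.closure {e (j - 2), e (j - 1)}) :
    r M (e '' Set.Iio n) ≤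
      (((Finset.range n).filter (fun j => j < 2 ∨ j % 2 ≠ p)).card : ℤ) := by
  set Gf := (Finset.range n).filter (fun j => j < 2 ∨ j % 2 ≠ p) with hGf
  set G : Set ℕ := ↑Gf with hG
  have hGIio : G ⊆ Set.Iio n := by
    intro j hj
    simp only [hG, hGf, Finset.coe_filter, Finset.mem_range, mem_setOf_eq] at hj
    exact hj.1
  have hGsub : e '' G ⊆ M.E := by
    rintro _ ⟨j, hj, rfl⟩; exact hmem j (hGIio hj)
  have key : ∀ j, j < n → e j ∈ M.closure (e '' G) := by
    intro j
    induction j using Nat.strong_induction_on with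
    | _ j IH =>
      intro hjn
      by_cases hj : j < 2 ∨ j % 2 ≠ p
      · refine M.subset_closure (e '' G) hGsub ⟨j, ?_, rfl⟩
        simp only [hG, hGf, Finset.coe_filter, Finset.mem_range, mem_setOf_eq]
        exact ⟨hjn, hj⟩
      · push_neg at hj
        obtain ⟨hj2, hjp⟩ := hj
        have h2 := hcl j hjn (by omega) hjp
        have hpair : ({e (j - 2), e (j - 1)} : Set α) ⊆ M.closure (e '' G) := by
          intro x hx
          rcases hx with h | h
          · exact h ▸ IH (j - 2) (by omega) (by omega)
          · rw [mem_singleton_iff] at h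
            exact h ▸ IH (j - 1) (by omega) (by omega)
        exact M.closure_subset_closure_of_subset_closure hpair h2
  have hsub : e '' Set.Iio n ⊆ M.closure (e '' G) := by
    rintro _ ⟨j, hj, rfl⟩; exact key j hj
  have hGfin : G.Finite := Gf.finite_toSet
  calc r M (e '' Set.Iio n) ≤ r M (e '' G) := r_le_of_subset_closure hsub
    _ ≤ ((e '' G).ncard : ℤ) := r_le_ncard (hGfin.image e)
    _ ≤ (Gf.card : ℤ) := by
        rw [ncard_image_of_injOn (hinj.mono hGIio), hG, ncard_coe_finset]

lemma fan_main [M.Finite] (hM : ThreeConnected M) (hord : FanOrd M n e)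
    (hcard : (e '' Set.Iio n).ncard + 2 ≤ M.E.ncard) (h0 : Triangle M (tri e 0)) :
    r M (e '' Set.Iio n) = ((n / 2 : ℕ) : ℤ) + 1 ∧
    r M✶ (e '' Set.Iio n) = (((n + 1) / 2 : ℕ) : ℤ) + 1 ∧
    lam M (e '' Set.Iio n) = 2 := by
  have hn3 : 3 ≤ n := hord.1
  have hinj : Set.InjOn e (Set.Iio n) := hord.2.1
  have hmem : ∀ i < n, e i ∈ M.E := hord.2.2.1
  set F := e '' Set.Iio n with hF
  have hFE : F ⊆ M.E := by rintro _ ⟨j, hj, rfl⟩; exact hmem j hj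
  have hFn : F.ncard = n := by
    rw [hF, ncard_image_of_injOn hinj]
    rw [show (Set.Iio n : Set ℕ) = ↑(Finset.Iio n) by simp, ncard_coe_finset, Nat.card_Iio]
  have hch := chain hord h0
  have hne : ∀ i j, i < n → j < n → i ≠ j → e i ≠ e j := fun i j hi hj hij hc =>
    hij (hinj hi hj hc)
  have hcl0 : ∀ j, j < n → 2 ≤ j → j % 2 = 0 → e j ∈ M.closure {e (j - 2), e (j - 1)} := by
    intro j hjn hj2 hjp
    have htri : Triangle M (tri e (j - 2)) := (hch (j - 2) (by omega)).1 (by omega)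
    rw [tri, show j - 2 + 1 = j - 1 by omega, show j - 2 + 2 = j by omega] at htri
    exact triangle_closure htri (hne _ _ (by omega) hjn (by omega))
      (hne _ _ (by omega) hjn (by omega))
  have hub1 : r M F ≤ ((n / 2 : ℕ) : ℤ) + 1 := by
    have h := r_fan_le (p := 0) hinj hmem hcl0
    rw [count0 (by omega), ← hF] at h
    push_cast at h ⊢
    omega
  have hcl1 : ∀ j, j < n → 2 ≤ j → j % 2 = 1 → e j ∈ M✶.closure {e (j - 2), e (j - 1)} := by
    intro j hjn hj2 hjp
    have htd : Triad M (tri e (j - 2)) := (hch (j - 2) (by omega)).2 (by omega)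
    have htri : Triangle M✶ (tri e (j - 2)) := htd
    rw [tri, show j - 2 + 1 = j - 1 by omega, show j - 2 + 2 = j by omega] at htri
    exact triangle_closure htri (hne _ _ (by omega) hjn (by omega))
      (hne _ _ (by omega) hjn (by omega))
  have hub2 : r M✶ F ≤ (((n + 1) / 2 : ℕ) : ℤ) + 1 := by
    have h := r_fan_le (M := M✶) (p := 1) hinj (fun i hi => hmem i hi) hcl1
    rw [count1 (by omega), ← hF] at h
    push_cast at h ⊢
    omega
  have hEF2 : 2 ≤ (M.E \ F).ncard := by
    have := ncard_diff_add_ncard_of_subset hFE M.ground_finite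
    omega
  have hlam2 : 2 ≤ lam M F := lam_ge_two hM hFE (by omega) hEF2
  have hd := r_dual_eq (M := M) hFE
  rw [hFn] at hd
  have hid : lam M F = r M F + r M✶ F - n := by
    rw [lam]
    omega
  refine ⟨by omega, by omega, by omega⟩

end Aux

/-- Rank, corank and connectivity of a fan of length at least 3 in a
3-connected matroid with at least two elements outside the fan. -/
theorem stmt5 (M : Matroid α) [M.Finite] (hM : ThreeConnected M)
    {n : ℕ} {e : ℕ → α} {F : Set α} (hord : FanOrd M n e) (hF : F = e '' Set.Iio n)
    (hcard : F.ncard + 2 ≤ M.E.ncard) :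
    (Triangle M {e 0, e 1, e 2} →
      r M F = (n / 2 : ℕ) + 1 ∧ r M✶ F = ((n + 1) / 2 : ℕ) + 1) ∧
    (Triad M {e 0, e 1, e 2} →
      r M F = ((n + 1) / 2 : ℕ) + 1 ∧ r M✶ F = (n / 2 : ℕ) + 1) ∧
    lam M F = 2 := by
  subst hF
  have htri0 : tri e 0 = {e 0, e 1, e 2} := by norm_num [tri]
  have case1 : Triangle M (tri e 0) →
      r M (e '' Set.Iio n) = ((n / 2 : ℕ) : ℤ) + 1 ∧
      r M✶ (e '' Set.Iio n) = (((n + 1) / 2 : ℕ) : ℤ) + 1 ∧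
      lam M (e '' Set.Iio n) = 2 := fun h0 => fan_main hM hord hcard h0
  have case2 : Triad M (tri e 0) →
      r M (e '' Set.Iio n) = (((n + 1) / 2 : ℕ) : ℤ) + 1 ∧
      r M✶ (e '' Set.Iio n) = ((n / 2 : ℕ) : ℤ) + 1 ∧
      lam M (e '' Set.Iio n) = 2 := by
    intro h0
    have hFE : e '' Set.Iio n ⊆ M.E := by
      rintro _ ⟨j, hj, rfl⟩; exact hord.2.2.1 j hj
    have hord' : FanOrd M✶ n e := by
      refine ⟨hord.1, hord.2.1, fun i hi => hord.2.2.1 i hi, Or.inl h0, ?_⟩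
      intro i hi
      have h := hord.2.2.2.2 i hi
      constructor
      · intro ht
        have := h.2 ht
        unfold Triad Cocircuit
        rw [dual_dual]
        exact this
      · intro ht
        have ht' : Triangle M (tri e i) := by
          unfold Triad Cocircuit at ht
          rwa [dual_dual] at ht
        exact h.1 ht'
    obtain ⟨a, b, c⟩ := fan_main (threeConnected_dual hM) hord' hcard h0
    rw [dual_dual] at b
    rw [lam_dual hFE] at c
    exact ⟨b, a, c⟩
  refine ⟨fun h => ?_, fun h => ?_, ?_⟩
  · obtain ⟨a, b, _⟩ := case1 (by rwa [htri0])
    exact ⟨a, b⟩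
  · obtain ⟨a, b, _⟩ := case2 (by rwa [htri0])
    exact ⟨a, b⟩
  · rcases hord.2.2.2.1 with h | h
    · exact (case1 h).2.2
    · exact (case2 h).2.2
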